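/- Under assumptions (A2)–(A8), the optimal shifted costs satisfy the upper estimate limsup_{T→+∞} C_T(û_T,x,z) ≤ v_f(x) + v_b(z), where C_T(û_T,x,z) := ∫₀ᵀ w(ŷ_T(t),û_T(t)) dt = v(T,x,z) − T·v̄ is the shifted optimal cost of the finite-horizon problem. -/

import Mathlib

open MeasureTheory Filter Topology Metric Set
open scoped Interval

noncomputable section

/-- Euclidean state/control spaces. -/
abbrev Euc (n : ℕ) := EuclideanSpace ℝ (Fin n)

/-- An admissible pair `(y,u)` on `[0,T]` for the dynamics `f` with control constraint set `Ω`: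
`u` is measurable, `Ω`-valued a.e. on `[0,T]`, and `y t = y 0 + ∫₀ᵗ f (y s) (u s) ds` on `[0,T]`. -/
def IsAdmissible {n p : ℕ} (f : Euc n → Euc p → Euc n) (Ω : Set (Euc p)) (T : ℝ)
    (y : ℝ → Euc n) (u : ℝ → Euc p) : Prop :=
  Measurable u ∧ (∀ᵐ t ∂(volume.restrict (Icc (0:ℝ) T)), u t ∈ Ω) ∧
  ∀ t ∈ Icc (0:ℝ) T, y t = y 0 + ∫ s in (0:ℝ)..t, f (y s) (u s)

/-- An admissible pair `(y,u)` on `[0,∞)` for the dynamics `f`. -/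
def IsAdmissibleInf {n p : ℕ} (f : Euc n → Euc p → Euc n) (Ω : Set (Euc p))
    (y : ℝ → Euc n) (u : ℝ → Euc p) : Prop :=
  Measurable u ∧ (∀ᵐ t ∂(volume.restrict (Ici (0:ℝ))), u t ∈ Ω) ∧
  ∀ t, 0 ≤ t → y t = y 0 + ∫ s in (0:ℝ)..t, f (y s) (u s)

/-- A class-K function: continuous, (strictly) increasing on `[0,∞)`, nonnegative, vanishing at `0`. -/
def IsClassK (α : ℝ → ℝ) : Prop :=
  ContinuousOn α (Ici 0) ∧ StrictMonoOn α (Ici 0) ∧ α 0 = 0 ∧ ∀ s ∈ Ici (0:ℝ), 0 ≤ α s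

/-- Strict dissipativity at `(ȳ,ū)` with supply rate `w`, (bounded) storage function `S` and
class-K function `α`. -/
def StrictlyDissipative {n p : ℕ} (f : Euc n → Euc p → Euc n) (Ω : Set (Euc p))
    (w : Euc n → Euc p → ℝ) (ybar : Euc n) (ubar : Euc p)
    (S : Euc n → ℝ) (α : ℝ → ℝ) : Prop :=
  (∃ M, ∀ x, |S x| ≤ M) ∧ IsClassK α ∧
  ∀ T > (0:ℝ), ∀ y u, IsAdmissible f Ω T y u →
    S (y T) + ∫ t in (0:ℝ)..T, α ‖(y t - ybar, u t - ubar)‖ ≤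
      S (y 0) + ∫ t in (0:ℝ)..T, w (y t) (u t)

/-- The value function `v(T,x,z)` of the finite-horizon problem. -/
def valueFn {n p : ℕ} (f : Euc n → Euc p → Euc n) (f0 : Euc n → Euc p → ℝ)
    (Ω : Set (Euc p)) (T : ℝ) (x z : Euc n) : ℝ :=
  sInf {c | ∃ y u, IsAdmissible f Ω T y u ∧ y 0 = x ∧ y T = z ∧
    c = ∫ t in (0:ℝ)..T, f0 (y t) (u t)}

/-- The value of the shifted infinite-horizon problem with dynamics `f`, running cost `w`
and initial state `x` (the cost of an admissible pair is the limit of its partial costs). -/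
def vInf {n p : ℕ} (f : Euc n → Euc p → Euc n) (Ω : Set (Euc p))
    (w : Euc n → Euc p → ℝ) (x : Euc n) : ℝ :=
  sInf {c | ∃ y u, IsAdmissibleInf f Ω y u ∧ y 0 = x ∧
    Tendsto (fun T => ∫ t in (0:ℝ)..T, w (y t) (u t)) atTop (𝓝 c)}

/-- Times at which `ybar` can be reached from `x` by an admissible pair for `f`. -/
def reachTimes {n p : ℕ} (f : Euc n → Euc p → Euc n) (Ω : Set (Euc p))
    (x ybar : Euc n) : Set ℝ :=
  {t | 0 ≤ t ∧ ∃ y u, IsAdmissible f Ω t y u ∧ y 0 = x ∧ y t = ybar}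

/-- The minimum time to reach `ybar` from `x` with the dynamics `f`. -/
def minTime {n p : ℕ} (f : Euc n → Euc p → Euc n) (Ω : Set (Euc p))
    (x ybar : Euc n) : ℝ :=
  sInf (reachTimes f Ω x ybar)

section Helpers

variable {n p : ℕ}

lemma intervalIntegrable_congr_ae' {E : Type*} [NormedAddCommGroup E] {f g : ℝ → E} {a b : ℝ}
    (h : IntervalIntegrable f volume a b) (he : ∀ᵐ x ∂(volume : Measure ℝ), x ∈ Ι a b → f x = g x) :
    IntervalIntegrable g volume a b := by
  rw [intervalIntegrable_iff] at h ⊢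
  exact h.congr_fun_ae (((ae_restrict_mem measurableSet_uIoc).and
    (ae_restrict_of_ae he)).mono (fun x hx => hx.2 hx.1))

lemma exists_bound_prod {E : Type*} [NormedAddCommGroup E] {g : Euc n → Euc p → E}
    (hg : Continuous (Function.uncurry g)) (x0 : Euc n) (q0 : Euc p) (R1 R2 : ℝ) :
    ∃ C, 0 ≤ C ∧ ∀ a q, ‖a - x0‖ ≤ R1 → ‖q - q0‖ ≤ R2 → ‖g a q‖ ≤ C := by
  obtain ⟨C, hC⟩ := ((isCompact_closedBall x0 R1).prod
    (isCompact_closedBall q0 R2)).exists_bound_of_continuousOn hg.continuousOn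
  refine ⟨max C 0, le_max_right _ _, fun a q ha hq => ?_⟩
  exact le_trans (hC (a, q) ⟨mem_closedBall_iff_norm.mpr ha, mem_closedBall_iff_norm.mpr hq⟩)
    (le_max_left _ _)

lemma comp_intervalIntegrable {E : Type*} [NormedAddCommGroup E] {g : Euc n → Euc p → E}
    (hg : Continuous (Function.uncurry g)) {Ω : Set (Euc p)} {c : ℝ}
    (hΩ : Ω ⊆ closedBall 0 c) {T : ℝ} (hT : 0 ≤ T) {y : ℝ → Euc n} {u : ℝ → Euc p}
    (hy : ContinuousOn y (Icc 0 T)) (hu : Measurable u)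
    (huΩ : ∀ᵐ t ∂(volume.restrict (Icc (0:ℝ) T)), u t ∈ Ω)
    {b : ℝ} (hb : ∀ t ∈ Icc (0:ℝ) T, ‖y t‖ ≤ b) :
    IntervalIntegrable (fun s => g (y s) (u s)) volume 0 T := by
  rw [intervalIntegrable_iff_integrableOn_Ioc_of_le hT]
  obtain ⟨C, hC0, hC⟩ := exists_bound_prod hg 0 0 b c
  have hyae : AEStronglyMeasurable y (volume.restrict (Ioc (0:ℝ) T)) :=
    (hy.aestronglyMeasurable measurableSet_Icc).mono_measure
      (Measure.restrict_mono Ioc_subset_Icc_self le_rfl)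
  have hpair : AEStronglyMeasurable (fun s => (y s, u s)) (volume.restrict (Ioc (0:ℝ) T)) :=
    hyae.prodMk hu.aestronglyMeasurable.restrict
  have hmeas : AEStronglyMeasurable (fun s => g (y s) (u s)) (volume.restrict (Ioc (0:ℝ) T)) :=
    hg.comp_aestronglyMeasurable hpair
  have huΩ' : ∀ᵐ s ∂(volume.restrict (Ioc (0:ℝ) T)), u s ∈ Ω :=
    ae_restrict_of_ae_restrict_of_subset Ioc_subset_Icc_self huΩ
  have hbd : ∀ᵐ s ∂(volume.restrict (Ioc (0:ℝ) T)), ‖g (y s) (u s)‖ ≤ C := by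
    filter_upwards [huΩ', ae_restrict_mem measurableSet_Ioc] with s hsΩ hs
    refine hC _ _ ?_ ?_
    · rw [sub_zero]; exact hb s (Ioc_subset_Icc_self hs)
    · rw [sub_zero]; exact mem_closedBall_zero_iff.mp (hΩ hsΩ)
  exact Integrable.mono' (integrableOn_const measure_Ioc_lt_top.ne enorm_ne_top) hmeas hbd

end Helpers
section Reg

variable {n p : ℕ}

lemma reg_core {f : Euc n → Euc p → Euc n}
    (hf : Continuous (Function.uncurry f)) {Ω : Set (Euc p)} {c : ℝ}
    (hΩ : Ω ⊆ closedBall 0 c) {T : ℝ} (hT : 0 ≤ T) {y : ℝ → Euc n} {u : ℝ → Euc p}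
    (had : IsAdmissible f Ω T y u) {b : ℝ} (hb : ∀ t ∈ Icc (0:ℝ) T, ‖y t‖ ≤ b) :
    ContinuousOn y (Icc 0 T) ∧
      IntervalIntegrable (fun s => f (y s) (u s)) volume 0 T := by
  obtain ⟨hu, huΩ, hode⟩ := had
  set F : ℝ → Euc n := fun s => f (y s) (u s) with hF
  obtain ⟨B, hB0, hB⟩ := exists_bound_prod hf (0 : Euc n) (0 : Euc p) b c
  have hFb : ∀ᵐ s ∂(volume.restrict (Icc (0:ℝ) T)), ‖F s‖ ≤ B := by
    filter_upwards [huΩ, ae_restrict_mem measurableSet_Icc] with s hsΩ hs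
    exact hB _ _ (by rw [sub_zero]; exact hb s hs)
      (by rw [sub_zero]; exact mem_closedBall_zero_iff.mp (hΩ hsΩ))
  have hFbglob : ∀ᵐ s ∂(volume : Measure ℝ), s ∈ Icc (0:ℝ) T → ‖F s‖ ≤ B :=
    (ae_restrict_iff' measurableSet_Icc).mp hFb
  set J : Set ℝ := {t | t ∈ Icc (0:ℝ) T ∧ IntegrableOn F (Ioc 0 t) volume} with hJ
  have h0J : (0:ℝ) ∈ J := ⟨⟨le_refl _, hT⟩, by simp [IntegrableOn]⟩
  have hJdown : ∀ t ∈ J, ∀ t', 0 ≤ t' → t' ≤ t → t' ∈ J := fun t ht t' h0 hle =>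
    ⟨⟨h0, hle.trans ht.1.2⟩, ht.2.mono_set (Ioc_subset_Ioc le_rfl hle)⟩
  have hII : ∀ t ∈ J, IntervalIntegrable F volume 0 t := fun t ht =>
    (intervalIntegrable_iff_integrableOn_Ioc_of_le ht.1.1).mpr ht.2
  have hLip : ∀ t' ∈ J, ∀ t ∈ J, t' ≤ t → ‖y t - y t'‖ ≤ B * (t - t') := by
    intro t' ht' t ht hle
    have h1 : IntervalIntegrable F volume 0 t' := hII t' ht'
    have h2 : IntervalIntegrable F volume t' t := by
      refine (hII t ht).mono_set ?_
      rw [uIcc_of_le hle, uIcc_of_le ht.1.1]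
      exact Icc_subset_Icc ht'.1.1 le_rfl
    have hadd := intervalIntegral.integral_add_adjacent_intervals h1 h2
    have hyeq : y t - y t' = ∫ s in t'..t, F s := by
      rw [hode t ht.1, hode t' ht'.1, ← hadd]; abel
    rw [hyeq]
    have hbd : ∀ᵐ x ∂(volume : Measure ℝ), x ∈ Ι t' t → ‖F x‖ ≤ B := by
      filter_upwards [hFbglob] with x hx hxm
      rw [uIoc_of_le hle] at hxm
      exact hx ⟨ht'.1.1.trans (le_of_lt hxm.1), hxm.2.trans ht.1.2⟩
    calc ‖∫ s in t'..t, F s‖ ≤ B * |t - t'| :=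
          intervalIntegral.norm_integral_le_of_norm_le_const_ae hbd
      _ = B * (t - t') := by rw [abs_of_nonneg (sub_nonneg.mpr hle)]
  have hJne : J.Nonempty := ⟨0, h0J⟩
  have hJbdd : BddAbove J := ⟨T, fun t ht => ht.1.2⟩
  have hts_mem : sSup J ∈ Icc (0:ℝ) T :=
    ⟨le_csSup hJbdd h0J, csSup_le hJne (fun t ht => ht.1.2)⟩
  have hcont_of : ∀ τ, τ ∈ J → ContinuousOn y (Icc 0 τ) := by
    intro τ hτ
    have hmemJ : ∀ t ∈ Icc (0:ℝ) τ, t ∈ J := fun t ht => hJdown τ hτ t ht.1 ht.2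
    have hl : LipschitzOnWith (Real.toNNReal B) y (Icc 0 τ) := by
      apply LipschitzOnWith.of_dist_le_mul
      intro s hs t ht
      rw [dist_eq_norm, Real.dist_eq, Real.coe_toNNReal B hB0]
      rcases le_total s t with h | h
      · rw [norm_sub_rev, abs_sub_comm, abs_of_nonneg (sub_nonneg.mpr h)]
        exact hLip s (hmemJ s hs) t (hmemJ t ht) h
      · rw [abs_of_nonneg (sub_nonneg.mpr h)]
        exact hLip t (hmemJ t ht) s (hmemJ s hs) h
    exact hl.continuousOn
  have hsupJ : sSup J ∈ J := by
    rcases eq_or_lt_of_le hts_mem.1 with h0 | hpos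
    · rw [← h0]; exact h0J
    · refine ⟨hts_mem, ?_⟩
      obtain ⟨v, hvmono, hvtend, hvmem⟩ := exists_seq_tendsto_sSup hJne hJbdd
      by_cases hend : ∃ k, v k = sSup J
      · obtain ⟨k, hk⟩ := hend
        exact hk ▸ (hvmem k).2
      · push_neg at hend
        have hvlt : ∀ k, v k < sSup J := fun k =>
          lt_of_le_of_ne (le_csSup hJbdd (hvmem k)) (hend k)
        have hU : (⋃ k, Ioc (0:ℝ) (v k)) = Ioo 0 (sSup J) := by
          ext ζ
          simp only [mem_iUnion, mem_Ioc, mem_Ioo]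
          constructor
          · rintro ⟨k, hz0, hzk⟩; exact ⟨hz0, lt_of_le_of_lt hzk (hvlt k)⟩
          · rintro ⟨hz0, hzs⟩
            obtain ⟨k, hk⟩ := (hvtend.eventually_const_lt hzs).exists
            exact ⟨k, hz0, le_of_lt hk⟩
        have haesm : AEStronglyMeasurable F (volume.restrict (Ioo 0 (sSup J))) := by
          rw [← hU]
          exact aestronglyMeasurable_iUnion_iff.mpr
            (fun k => ((hvmem k).2).aestronglyMeasurable)
        have haesm' : AEStronglyMeasurable F (volume.restrict (Ioc 0 (sSup J))) := by
          rwa [Measure.restrict_congr_set Ioo_ae_eq_Ioc] at haesm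
        refine Integrable.mono' (g := fun _ => B)
          (integrableOn_const measure_Ioc_lt_top.ne enorm_ne_top) haesm' ?_
        refine ae_restrict_of_ae_restrict_of_subset ?_ hFb
        exact fun ζ hζ => ⟨le_of_lt hζ.1, hζ.2.trans hts_mem.2⟩
  have hTJ : T ∈ J := by
    by_contra hTn
    have hlt : sSup J < T := lt_of_le_of_ne hts_mem.2 (fun h => hTn (h ▸ hsupJ))
    have hconst : ∀ t, t ∈ Ioc (sSup J) T → y t = y 0 := by
      intro t ht
      have h0t : (0:ℝ) ≤ t := hts_mem.1.trans (le_of_lt ht.1)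
      have htn : t ∉ J := fun hmem => (not_lt.mpr (le_csSup hJbdd hmem)) ht.1
      have hnint : ¬ IntervalIntegrable F volume 0 t := by
        intro hint
        exact htn ⟨⟨h0t, ht.2⟩,
          (intervalIntegrable_iff_integrableOn_Ioc_of_le h0t).mp hint⟩
      have h0 : (∫ s in (0:ℝ)..t, F s) = 0 := intervalIntegral.integral_undef hnint
      rw [hode t ⟨h0t, ht.2⟩, h0, add_zero]
    have hyae : AEStronglyMeasurable y (volume.restrict (Ioc (0:ℝ) T)) := by
      have hsplit : Ioc (0:ℝ) T = Ioc 0 (sSup J) ∪ Ioc (sSup J) T :=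
        (Ioc_union_Ioc_eq_Ioc hts_mem.1 (le_of_lt hlt)).symm
      rw [hsplit]
      refine aestronglyMeasurable_union_iff.mpr ⟨?_, ?_⟩
      · exact ((hcont_of _ hsupJ).aestronglyMeasurable measurableSet_Icc).mono_measure
          (Measure.restrict_mono Ioc_subset_Icc_self le_rfl)
      · refine (aestronglyMeasurable_const (b := y 0)).congr ?_
        filter_upwards [ae_restrict_mem measurableSet_Ioc] with t ht
        exact (hconst t ht).symm
    have hpair : AEStronglyMeasurable (fun s => (y s, u s)) (volume.restrict (Ioc (0:ℝ) T)) :=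
      hyae.prodMk hu.aestronglyMeasurable.restrict
    have hmeasF : AEStronglyMeasurable F (volume.restrict (Ioc (0:ℝ) T)) :=
      hf.comp_aestronglyMeasurable hpair
    have : IntegrableOn F (Ioc 0 T) volume := by
      refine Integrable.mono' (g := fun _ => B)
        (integrableOn_const measure_Ioc_lt_top.ne enorm_ne_top) hmeasF ?_
      exact ae_restrict_of_ae_restrict_of_subset Ioc_subset_Icc_self hFb
    exact hTn ⟨⟨le_refl 0 |>.trans hT, le_refl T⟩, this⟩
  exact ⟨hcont_of T hTJ, hII T hTJ⟩

end Reg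
section Glue

/-- Glue two functions, the second delayed by `a`, switching at time `a` (left-open). -/
def glueFn {A : Type*} (a : ℝ) (g1 g2 : ℝ → A) : ℝ → A := fun t => if t < a then g1 t else g2 (t - a)

/-- Glue two trajectories, the second delayed by `a`, switching at time `a` (left-closed). -/
def glueTraj {A : Type*} (a : ℝ) (y1 y2 : ℝ → A) : ℝ → A :=
  fun t => if t ≤ a then y1 t else y2 (t - a)

variable {n p : ℕ}

lemma glueTraj_zero {A : Type*} {a : ℝ} (ha : 0 ≤ a) (y1 y2 : ℝ → A) :
    glueTraj a y1 y2 0 = y1 0 := by simp [glueTraj, ha]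

lemma glueTraj_end {A : Type*} {a b : ℝ} (hb : 0 ≤ b) {y1 y2 : ℝ → A}
    (hmatch : y2 0 = y1 a) : glueTraj a y1 y2 (a + b) = y2 b := by
  rcases eq_or_lt_of_le hb with h0 | hpos
  · simp [glueTraj, ← h0, hmatch]
  · rw [glueTraj, if_neg (by linarith), add_sub_cancel_left]

lemma concat_comp_eq {A : Type*} (g : Euc n → Euc p → A) {a : ℝ} {y₁ y₂ : ℝ → Euc n}
    {u₁ u₂ : ℝ → Euc p} (hmatch : y₂ 0 = y₁ a) :
    (fun t => g (glueTraj a y₁ y₂ t) (glueFn a u₁ u₂ t)) =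
      glueFn a (fun t => g (y₁ t) (u₁ t)) (fun t => g (y₂ t) (u₂ t)) := by
  funext t
  by_cases h : t < a
  · simp [glueTraj, glueFn, h, le_of_lt h]
  · have hta : a ≤ t := not_lt.mp h
    rcases eq_or_lt_of_le hta with he | hlt
    · simp [glueTraj, glueFn, h, ← he, hmatch]
    · simp [glueTraj, glueFn, h, not_le.mpr hlt]

lemma ae_ne (a : ℝ) : ∀ᵐ t ∂(volume : Measure ℝ), t ≠ a := by
  rw [ae_iff]
  simpa using measure_singleton (α := ℝ) a

lemma glue_intervalIntegrable {E : Type*} [NormedAddCommGroup E] [NormedSpace ℝ E]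
    {G1 G2 : ℝ → E} {a b : ℝ} (ha : 0 ≤ a) (hb : 0 ≤ b)
    (h1 : IntervalIntegrable G1 volume 0 a) (h2 : IntervalIntegrable G2 volume 0 b) :
    IntervalIntegrable (glueFn a G1 G2) volume 0 (a + b) ∧
    (∫ t in (0:ℝ)..(a+b), glueFn a G1 G2 t) =
      (∫ t in (0:ℝ)..a, G1 t) + ∫ t in (0:ℝ)..b, G2 t := by
  have hIa : IntervalIntegrable (glueFn a G1 G2) volume 0 a := by
    apply intervalIntegrable_congr_ae' h1
    filter_upwards [ae_ne a] with t hta htm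
    rw [uIoc_of_le ha] at htm
    rw [glueFn, if_pos (lt_of_le_of_ne htm.2 hta)]
  have hshift : IntervalIntegrable (fun t => G2 (t - a)) volume a (a + b) := by
    simpa [zero_add, add_comm] using h2.comp_sub_right a
  have hIab : IntervalIntegrable (glueFn a G1 G2) volume a (a + b) := by
    apply intervalIntegrable_congr_ae' hshift
    refine Eventually.of_forall (fun t htm => ?_)
    rw [uIoc_of_le (by linarith : a ≤ a + b)] at htm
    rw [glueFn, if_neg (not_lt.mpr (le_of_lt htm.1))]
  refine ⟨hIa.trans hIab, ?_⟩
  rw [← intervalIntegral.integral_add_adjacent_intervals hIa hIab]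
  congr 1
  · apply intervalIntegral.integral_congr_ae
    filter_upwards [ae_ne a] with t hta htm
    rw [uIoc_of_le ha] at htm
    rw [glueFn, if_pos (lt_of_le_of_ne htm.2 hta)]
  · have e1 : (∫ t in a..(a+b), glueFn a G1 G2 t) = ∫ t in a..(a+b), G2 (t - a) := by
      apply intervalIntegral.integral_congr
      intro t htm
      rw [uIcc_of_le (by linarith : a ≤ a + b)] at htm
      rw [glueFn, if_neg (not_lt.mpr htm.1)]
    rw [e1]
    have := intervalIntegral.integral_comp_sub_right (a := a) (b := a + b) (fun s => G2 s) a
    simpa using this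

lemma concat_admissible {f : Euc n → Euc p → Euc n} {Ω : Set (Euc p)} (hΩm : MeasurableSet Ω)
    {a b : ℝ} (ha : 0 ≤ a) (hb : 0 ≤ b) {y₁ y₂ : ℝ → Euc n} {u₁ u₂ : ℝ → Euc p}
    (h1 : IsAdmissible f Ω a y₁ u₁) (h2 : IsAdmissible f Ω b y₂ u₂)
    (hmatch : y₂ 0 = y₁ a)
    (hint1 : IntervalIntegrable (fun s => f (y₁ s) (u₁ s)) volume 0 a)
    (hint2 : IntervalIntegrable (fun s => f (y₂ s) (u₂ s)) volume 0 b) :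
    IsAdmissible f Ω (a + b) (glueTraj a y₁ y₂) (glueFn a u₁ u₂) := by
  obtain ⟨hu1, hΩ1, hode1⟩ := h1
  obtain ⟨hu2, hΩ2, hode2⟩ := h2
  have hUmeas : Measurable (glueFn a u₁ u₂) :=
    Measurable.ite measurableSet_Iio hu1 (hu2.comp (measurable_id.sub measurable_const))
  have hcomp := concat_comp_eq (u₁ := u₁) (u₂ := u₂) f hmatch
  have hglue := glue_intervalIntegrable ha hb hint1 hint2
  have hIIG : IntervalIntegrable (fun t => f (glueTraj a y₁ y₂ t) (glueFn a u₁ u₂ t))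
      volume 0 (a + b) := by rw [hcomp]; exact hglue.1
  refine ⟨hUmeas, ?_, ?_⟩
  · -- a.e. control constraint
    rw [ae_restrict_iff' measurableSet_Icc, ae_iff]
    have hsub : {t | ¬ (t ∈ Icc (0:ℝ) (a+b) → glueFn a u₁ u₂ t ∈ Ω)} ⊆
        {t | ¬ (t ∈ Icc (0:ℝ) a → u₁ t ∈ Ω)} ∪
          (fun t => t - a) ⁻¹' {s | ¬ (s ∈ Icc (0:ℝ) b → u₂ s ∈ Ω)} := by
      intro t ht
      simp only [mem_setOf_eq, Classical.not_imp] at ht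
      obtain ⟨⟨ht0, htab⟩, htΩ⟩ := ht
      by_cases h : t < a
      · left
        simp only [mem_setOf_eq, Classical.not_imp]
        refine ⟨⟨ht0, le_of_lt h⟩, ?_⟩
        rwa [glueFn, if_pos h] at htΩ
      · right
        simp only [mem_preimage, mem_setOf_eq, Classical.not_imp]
        refine ⟨⟨by linarith [not_lt.mp h], by linarith⟩, ?_⟩
        rwa [glueFn, if_neg h] at htΩ
    refine measure_mono_null hsub (le_antisymm (le_trans (measure_union_le _ _) ?_) bot_le)
    have e1 : volume {t | ¬ (t ∈ Icc (0:ℝ) a → u₁ t ∈ Ω)} = 0 := by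
      rw [← ae_iff]; exact (ae_restrict_iff' measurableSet_Icc).mp hΩ1
    have e2 : volume {s | ¬ (s ∈ Icc (0:ℝ) b → u₂ s ∈ Ω)} = 0 := by
      rw [← ae_iff]; exact (ae_restrict_iff' measurableSet_Icc).mp hΩ2
    have e3 : volume ((fun t => t - a) ⁻¹' {s | ¬ (s ∈ Icc (0:ℝ) b → u₂ s ∈ Ω)}) = 0 := by
      rw [show (fun t : ℝ => t - a) = (fun t : ℝ => t + (-a)) by funext t; ring,
        measure_preimage_add_right]
      exact e2
    rw [e1, e3]
    simp
  · -- integral identity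
    intro t ht
    have hY0 : glueTraj a y₁ y₂ 0 = y₁ 0 := glueTraj_zero ha _ _
    have hGeq : ∀ cc d : ℝ, (∫ s in cc..d, f (glueTraj a y₁ y₂ s) (glueFn a u₁ u₂ s)) =
        ∫ s in cc..d, glueFn a (fun s => f (y₁ s) (u₁ s)) (fun s => f (y₂ s) (u₂ s)) s :=
      fun cc d => by rw [hcomp]
    by_cases hta : t ≤ a
    · have e1 : (∫ s in (0:ℝ)..t, f (glueTraj a y₁ y₂ s) (glueFn a u₁ u₂ s)) =
          ∫ s in (0:ℝ)..t, f (y₁ s) (u₁ s) := by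
        rw [hGeq 0 t]
        apply intervalIntegral.integral_congr_ae
        filter_upwards [ae_ne a] with s hsa hsm
        rw [uIoc_of_le ht.1] at hsm
        have hsa' : s < a := lt_of_le_of_ne (hsm.2.trans hta) hsa
        simp only [glueFn]
        rw [if_pos hsa']
      have hYt : glueTraj a y₁ y₂ t = y₁ t := by
        simp only [glueTraj]; rw [if_pos hta]
      rw [hYt, hY0, e1]
      exact hode1 t ⟨ht.1, hta⟩
    · push_neg at hta
      have h0a : (0:ℝ) ≤ t - a := by linarith
      have hG0a : IntervalIntegrable (fun s => f (glueTraj a y₁ y₂ s) (glueFn a u₁ u₂ s))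
          volume 0 a := hIIG.mono_set (by
        rw [uIcc_of_le ha, uIcc_of_le (by linarith : (0:ℝ) ≤ a + b)]
        exact Icc_subset_Icc le_rfl (by linarith))
      have hGat : IntervalIntegrable (fun s => f (glueTraj a y₁ y₂ s) (glueFn a u₁ u₂ s))
          volume a t := hIIG.mono_set (by
        rw [uIcc_of_le (le_of_lt hta), uIcc_of_le (by linarith : (0:ℝ) ≤ a + b)]
        exact Icc_subset_Icc ha ht.2)
      rw [← intervalIntegral.integral_add_adjacent_intervals hG0a hGat]
      have e1 : (∫ s in (0:ℝ)..a, f (glueTraj a y₁ y₂ s) (glueFn a u₁ u₂ s)) =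
          ∫ s in (0:ℝ)..a, f (y₁ s) (u₁ s) := by
        rw [hGeq 0 a]
        apply intervalIntegral.integral_congr_ae
        filter_upwards [ae_ne a] with s hsa hsm
        rw [uIoc_of_le ha] at hsm
        have hsa' : s < a := lt_of_le_of_ne hsm.2 hsa
        simp only [glueFn]
        rw [if_pos hsa']
      have e2 : (∫ s in a..t, f (glueTraj a y₁ y₂ s) (glueFn a u₁ u₂ s)) =
          ∫ s in (0:ℝ)..(t - a), f (y₂ s) (u₂ s) := by
        have e2a : (∫ s in a..t, f (glueTraj a y₁ y₂ s) (glueFn a u₁ u₂ s)) =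
            ∫ s in a..t, f (y₂ (s - a)) (u₂ (s - a)) := by
          rw [hGeq a t]
          apply intervalIntegral.integral_congr
          intro s hsm
          rw [uIcc_of_le (le_of_lt hta)] at hsm
          simp only [glueFn]
          rw [if_neg (not_lt.mpr hsm.1)]
        rw [e2a]
        have := intervalIntegral.integral_comp_sub_right (a := a) (b := t)
          (fun s => f (y₂ s) (u₂ s)) a
        simpa using this
      have hYt : glueTraj a y₁ y₂ t = y₂ (t - a) := by
        simp only [glueTraj]; rw [if_neg (not_le.mpr hta)]
      rw [e1, e2, hYt, hY0, hode2 (t - a) ⟨h0a, by linarith [ht.2]⟩, hmatch,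
        hode1 a ⟨ha, le_refl a⟩]
      abel

end Glue
section More

variable {n p : ℕ}

lemma concat_integral {E : Type*} [NormedAddCommGroup E] [NormedSpace ℝ E]
    (g : Euc n → Euc p → E) {a b : ℝ} (ha : 0 ≤ a) (hb : 0 ≤ b)
    {y₁ y₂ : ℝ → Euc n} {u₁ u₂ : ℝ → Euc p} (hmatch : y₂ 0 = y₁ a)
    (hg1 : IntervalIntegrable (fun s => g (y₁ s) (u₁ s)) volume 0 a)
    (hg2 : IntervalIntegrable (fun s => g (y₂ s) (u₂ s)) volume 0 b) :
    IntervalIntegrable (fun t => g (glueTraj a y₁ y₂ t) (glueFn a u₁ u₂ t)) volume 0 (a+b) ∧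
    (∫ t in (0:ℝ)..(a+b), g (glueTraj a y₁ y₂ t) (glueFn a u₁ u₂ t)) =
      (∫ t in (0:ℝ)..a, g (y₁ t) (u₁ t)) + ∫ t in (0:ℝ)..b, g (y₂ t) (u₂ t) := by
  have hcomp := concat_comp_eq (u₁ := u₁) (u₂ := u₂) g hmatch
  have hglue := glue_intervalIntegrable ha hb hg1 hg2
  constructor
  · rw [hcomp]; exact hglue.1
  · rw [show (∫ t in (0:ℝ)..(a+b), g (glueTraj a y₁ y₂ t) (glueFn a u₁ u₂ t)) =
        ∫ t in (0:ℝ)..(a+b), glueFn a (fun s => g (y₁ s) (u₁ s))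
          (fun s => g (y₂ s) (u₂ s)) t from by rw [hcomp] ]
    exact hglue.2

lemma reverse_admissible {f : Euc n → Euc p → Euc n} {Ω : Set (Euc p)}
    {L : ℝ} (hL : 0 ≤ L) {y : ℝ → Euc n} {u : ℝ → Euc p}
    (had : IsAdmissible (fun a q => -f a q) Ω L y u)
    (hint : IntervalIntegrable (fun s => f (y s) (u s)) volume 0 L) :
    IsAdmissible f Ω L (fun t => y (L - t)) (fun t => u (L - t)) := by
  obtain ⟨hu, huΩ, hode⟩ := had
  refine ⟨hu.comp (measurable_const.sub measurable_id), ?_, ?_⟩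
  · rw [ae_restrict_iff' measurableSet_Icc, ae_iff]
    have hsub : {t | ¬ (t ∈ Icc (0:ℝ) L → u (L - t) ∈ Ω)} ⊆
        (fun t => L - t) ⁻¹' {s | ¬ (s ∈ Icc (0:ℝ) L → u s ∈ Ω)} := by
      intro t ht
      simp only [mem_setOf_eq, Classical.not_imp, mem_Icc, mem_preimage] at ht ⊢
      obtain ⟨⟨ht0, htL⟩, htΩ⟩ := ht
      exact ⟨⟨by linarith, by linarith⟩, htΩ⟩
    refine measure_mono_null hsub ?_
    have e2 : volume {s | ¬ (s ∈ Icc (0:ℝ) L → u s ∈ Ω)} = 0 := by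
      rw [← ae_iff]; exact (ae_restrict_iff' measurableSet_Icc).mp huΩ
    have h1 : (fun t : ℝ => L - t) = (fun s : ℝ => s + L) ∘ (fun t : ℝ => -t) := by
      funext t; simp [Function.comp]; ring
    rw [h1, preimage_comp]
    rw [show (fun t : ℝ => -t) = (Neg.neg : ℝ → ℝ) from rfl, Measure.measure_preimage_neg,
      measure_preimage_add_right]
    exact e2
  · intro t ht
    have hIIn : IntervalIntegrable (fun s => -f (y s) (u s)) volume 0 L := hint.neg
    have h1 : IntervalIntegrable (fun s => -f (y s) (u s)) volume 0 (L - t) :=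
      hIIn.mono_set (by
        rw [uIcc_of_le (by linarith [ht.2] : (0:ℝ) ≤ L - t), uIcc_of_le hL]
        exact Icc_subset_Icc le_rfl (by linarith [ht.1]))
    have h2 : IntervalIntegrable (fun s => -f (y s) (u s)) volume (L - t) L :=
      hIIn.mono_set (by
        rw [uIcc_of_le (by linarith [ht.1] : L - t ≤ L), uIcc_of_le hL]
        exact Icc_subset_Icc (by linarith [ht.2]) le_rfl)
    have hadd := intervalIntegral.integral_add_adjacent_intervals h1 h2
    have e0 : y (L - t) = y 0 + ∫ s in (0:ℝ)..(L - t), -f (y s) (u s) :=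
      hode (L - t) ⟨by linarith [ht.2], by linarith [ht.1]⟩
    have eL : y L = y 0 + ∫ s in (0:ℝ)..L, -f (y s) (u s) := hode L ⟨hL, le_refl L⟩
    have ecv : (∫ s in (0:ℝ)..t, f (y (L - s)) (u (L - s))) =
        ∫ s in (L - t)..L, f (y s) (u s) := by
      have := intervalIntegral.integral_comp_sub_left (a := (0:ℝ)) (b := t)
        (fun s => f (y s) (u s)) L
      simpa using this
    have hneg : (∫ s in (L - t)..L, -f (y s) (u s)) =
        - ∫ s in (L - t)..L, f (y s) (u s) := intervalIntegral.integral_neg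
    show y (L - t) = y (L - 0) + ∫ s in (0:ℝ)..t, f (y (L - s)) (u (L - s))
    calc y (L - t) = y 0 + ∫ s in (0:ℝ)..(L - t), -f (y s) (u s) := e0
      _ = y 0 + ((∫ s in (0:ℝ)..(L - t), -f (y s) (u s)) +
            (∫ s in (L - t)..L, -f (y s) (u s))) - (∫ s in (L - t)..L, -f (y s) (u s)) := by
          abel
      _ = y L + ∫ s in (L - t)..L, f (y s) (u s) := by rw [hadd, ← eL, hneg]; abel
      _ = y (L - 0) + ∫ s in (0:ℝ)..t, f (y (L - s)) (u (L - s)) := by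
          rw [ecv, show L - (0:ℝ) = L by ring]

lemma IsAdmissibleInf.restrict' {f : Euc n → Euc p → Euc n} {Ω : Set (Euc p)}
    {y : ℝ → Euc n} {u : ℝ → Euc p} (h : IsAdmissibleInf f Ω y u) {T : ℝ} (hT : 0 ≤ T) :
    IsAdmissible f Ω T y u :=
  ⟨h.1, ae_restrict_of_ae_restrict_of_subset (fun t ht => ht.1) h.2.1,
    fun t ht => h.2.2 t ht.1⟩

lemma recur_abstract {g : ℝ → ℝ} (hg : ∀ T, 0 ≤ T → IntervalIntegrable g volume 0 T)
    (hg0 : ∀ t, 0 ≤ g t) {C : ℝ}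
    (hC : ∀ T, 0 ≤ T → (∫ t in (0:ℝ)..T, g t) ≤ C)
    {δ' : ℝ} (hδ' : 0 < δ') {N : ℝ} (hN : 0 ≤ N) (hlow : ∀ t, N ≤ t → δ' ≤ g t) : False := by
  set T := N + (C + 1) / δ' with hT
  have hC0 : 0 ≤ C := le_trans (by simp) (hC 0 le_rfl)
  have hTN : N ≤ T := by
    have h0 : 0 ≤ (C + 1) / δ' := div_nonneg (by linarith) (le_of_lt hδ')
    rw [hT]; linarith
  have hT0 : 0 ≤ T := hN.trans hTN
  have h1 : IntervalIntegrable g volume 0 N := (hg T hT0).mono_set (by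
    rw [uIcc_of_le hN, uIcc_of_le hT0]; exact Icc_subset_Icc le_rfl hTN)
  have h2 : IntervalIntegrable g volume N T := (hg T hT0).mono_set (by
    rw [uIcc_of_le hTN, uIcc_of_le hT0]; exact Icc_subset_Icc hN le_rfl)
  have hadd := intervalIntegral.integral_add_adjacent_intervals h1 h2
  have hP1 : 0 ≤ ∫ t in (0:ℝ)..N, g t :=
    intervalIntegral.integral_nonneg hN (fun t _ => hg0 t)
  have hP2 : (T - N) * δ' ≤ ∫ t in N..T, g t := by
    have hmono := intervalIntegral.integral_mono_on hTN intervalIntegrable_const h2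
      (fun t htm => hlow t htm.1)
    rwa [intervalIntegral.integral_const, smul_eq_mul] at hmono
  have hfin : (T - N) * δ' ≤ C := by
    have hCT := hC T hT0
    rw [← hadd] at hCT
    linarith
  have hTsub : T - N = (C + 1) / δ' := by rw [hT]; ring
  rw [hTsub, div_mul_cancel₀ _ (ne_of_gt hδ')] at hfin
  linarith

end More
/-- Step 2 (upper estimate): `limsup_{T→∞} C_T(û_T,x,z) ≤ v_f(x) + v_b(z)`,
where `C_T(û_T,x,z) = ∫₀ᵀ w(ŷ_T,û_T)` is the shifted optimal cost. -/
theorem shifted_cost_upper_estimate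
    {n pp : ℕ} (c : ℝ)
    (f : Euc n → Euc pp → Euc n) (f0 : Euc n → Euc pp → ℝ)
    (Ω : Set (Euc pp))
    -- (A1) regularity of the data
    (hf : ContDiff ℝ 1 (Function.uncurry f))
    (hf0 : ContDiff ℝ 1 (Function.uncurry f0))
    (hΩcpt : IsCompact Ω) (hΩball : Ω ⊆ closedBall 0 c)
    -- static problem and its unique minimizer
    (ybar : Euc n) (ubar : Euc pp) (vbar : ℝ)
    (hfbar : f ybar ubar = 0) (hvbar : f0 ybar ubar = vbar)
    (hstatmin : ∀ y u, f y u = 0 → vbar ≤ f0 y u)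
    (hstatuniq : ∀ y u, f y u = 0 → f0 y u = vbar → y = ybar ∧ u = ubar)
    -- shifted cost
    (w : Euc n → Euc pp → ℝ) (hwdef : w = fun y u => f0 y u - f0 ybar ubar)
    (x z : Euc n)
    -- (A2): existence and uniqueness of optimal solutions
    (T0 : ℝ) (hT0 : 0 < T0)
    (yT : ℝ → ℝ → Euc n) (uT : ℝ → ℝ → Euc pp)
    (yf : ℝ → Euc n) (uf : ℝ → Euc pp) (yb : ℝ → Euc n) (ub : ℝ → Euc pp)
    (hoptT : ∀ T, T0 ≤ T → IsAdmissible f Ω T (yT T) (uT T) ∧ yT T 0 = x ∧ yT T T = z ∧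
      (∫ t in (0:ℝ)..T, f0 (yT T t) (uT T t)) = valueFn f f0 Ω T x z)
    (huniqT : ∀ T, T0 ≤ T → ∀ y' u', IsAdmissible f Ω T y' u' → y' 0 = x → y' T = z →
      (∫ t in (0:ℝ)..T, f0 (y' t) (u' t)) = valueFn f f0 Ω T x z →
      (∀ t ∈ Icc (0:ℝ) T, y' t = yT T t) ∧
      (∀ᵐ t ∂(volume.restrict (Icc (0:ℝ) T)), u' t = uT T t))
    (hoptf : IsAdmissibleInf f Ω yf uf ∧ yf 0 = x ∧
      Tendsto (fun T => ∫ t in (0:ℝ)..T, w (yf t) (uf t)) atTop (𝓝 (vInf f Ω w x)))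
    (huniqf : ∀ y' u', IsAdmissibleInf f Ω y' u' → y' 0 = x →
      Tendsto (fun T => ∫ t in (0:ℝ)..T, w (y' t) (u' t)) atTop (𝓝 (vInf f Ω w x)) →
      (∀ t, 0 ≤ t → y' t = yf t) ∧ (∀ᵐ t ∂(volume.restrict (Ici (0:ℝ))), u' t = uf t))
    (hoptb : IsAdmissibleInf (fun a b => -f a b) Ω yb ub ∧ yb 0 = z ∧
      Tendsto (fun T => ∫ t in (0:ℝ)..T, w (yb t) (ub t)) atTop
        (𝓝 (vInf (fun a b => -f a b) Ω w z)))
    (huniqb : ∀ y' u', IsAdmissibleInf (fun a b => -f a b) Ω y' u' → y' 0 = z →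
      Tendsto (fun T => ∫ t in (0:ℝ)..T, w (y' t) (u' t)) atTop
        (𝓝 (vInf (fun a b => -f a b) Ω w z)) →
      (∀ t, 0 ≤ t → y' t = yb t) ∧ (∀ᵐ t ∂(volume.restrict (Ici (0:ℝ))), u' t = ub t))
    -- (A3): uniform boundedness of the optimal trajectories
    (b : ℝ)
    (hbndT : ∀ T, T0 ≤ T → ∀ t ∈ Icc (0:ℝ) T, ‖yT T t‖ ≤ b)
    (hbndf : ∀ t, 0 ≤ t → ‖yf t‖ ≤ b)
    (hbndb : ∀ t, 0 ≤ t → ‖yb t‖ ≤ b)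
    -- (A4): uniform boundedness of the optimal (shifted) costs
    (M : ℝ)
    (hcstT : ∀ T, T0 ≤ T → |∫ t in (0:ℝ)..T, w (yT T t) (uT T t)| ≤ M)
    (hcstf : ∀ T, 0 ≤ T → |∫ t in (0:ℝ)..T, w (yf t) (uf t)| ≤ M)
    (hcstb : ∀ T, 0 ≤ T → |∫ t in (0:ℝ)..T, w (yb t) (ub t)| ≤ M)
    -- (A5): the static control is interior
    (hubar : ubar ∈ interior Ω)
    -- (A6): strict dissipativity
    (S : Euc n → ℝ) (α : ℝ → ℝ)
    (hdis : StrictlyDissipative f Ω w ybar ubar S α)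
    -- (A7): minimum time functions are finite (and attained) near ȳ, vanish and are continuous at ȳ
    (r : ℝ) (hr : 0 < r)
    (hreachf : ∀ x' ∈ ball ybar r, minTime f Ω x' ybar ∈ reachTimes f Ω x' ybar)
    (hreachb : ∀ x' ∈ ball ybar r,
      minTime (fun a b => -f a b) Ω x' ybar ∈ reachTimes (fun a b => -f a b) Ω x' ybar)
    (hτf0 : minTime f Ω ybar ybar = 0)
    (hτb0 : minTime (fun a b => -f a b) Ω ybar ybar = 0)
    (hτfcont : ContinuousWithinAt (fun x' => minTime f Ω x' ybar) (ball ybar r) ybar)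
    (hτbcont : ContinuousWithinAt (fun x' => minTime (fun a b => -f a b) Ω x' ybar)
      (ball ybar r) ybar)
    -- (A8): local boundedness of the minimum time trajectories and controls near the turnpike
    (r2 Kr : ℝ) (hr2 : 0 < r2) (hKr : 0 < Kr)
    (hA8f : ∀ x' ∈ closedBall ybar r2, ∃ y' u',
      IsAdmissible f Ω (minTime f Ω x' ybar) y' u' ∧ y' 0 = x' ∧
      y' (minTime f Ω x' ybar) = ybar ∧
      ∀ t ∈ Icc (0:ℝ) (minTime f Ω x' ybar), ‖y' t - ybar‖ + ‖u' t - ubar‖ ≤ Kr)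
    (hA8b : ∀ x' ∈ closedBall ybar r2, ∃ y' u',
      IsAdmissible (fun a b => -f a b) Ω (minTime (fun a b => -f a b) Ω x' ybar) y' u' ∧
      y' 0 = x' ∧ y' (minTime (fun a b => -f a b) Ω x' ybar) = ybar ∧
      ∀ t ∈ Icc (0:ℝ) (minTime (fun a b => -f a b) Ω x' ybar),
        ‖y' t - ybar‖ + ‖u' t - ubar‖ ≤ Kr)
    :
    atTop.limsup (fun T => ∫ t in (0:ℝ)..T, w (yT T t) (uT T t)) ≤
      vInf f Ω w x + vInf (fun a b => -f a b) Ω w z := by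
  clear huniqT huniqf huniqb hstatmin hstatuniq hreachf hreachb
  obtain ⟨⟨Ms, hMs⟩, hαK, hDI⟩ := hdis
  obtain ⟨hαcont, hαmono, hα0, hαnn⟩ := hαK
  have hfc : Continuous (Function.uncurry f) := hf.continuous
  have hnfc : Continuous (Function.uncurry (fun (a : Euc n) (q : Euc pp) => -f a q)) :=
    hfc.neg
  have hf0c : Continuous (Function.uncurry f0) := hf0.continuous
  have hwc : Continuous (Function.uncurry w) := by
    rw [hwdef]; exact hf0c.sub continuous_const
  have hMs0 : 0 ≤ Ms := (abs_nonneg _).trans (hMs ybar)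
  have hM0 : 0 ≤ M := (abs_nonneg _).trans (hcstf 0 le_rfl)
  have hwbar : w ybar ubar = 0 := by rw [hwdef]; simp
  have hubarΩ : ubar ∈ Ω := interior_subset hubar
  have hf0w : ∀ (yy : Euc n) (uu : Euc pp), f0 yy uu = w yy uu + vbar := by
    intro yy uu; rw [hwdef]; simp [hvbar]
  -- the truncated class-K function
  set αx : ℝ → ℝ := fun s => α (max s 0) with hαx
  have hαxcont : Continuous αx :=
    hαcont.comp_continuous (continuous_id.max continuous_const)
      (fun s => mem_Ici.mpr (le_max_right _ _))
  have hαxeq : ∀ s : ℝ, 0 ≤ s → αx s = α s := by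
    intro s hs; rw [hαx]; simp [max_eq_left hs]
  -- regularity of the infinite-horizon optimal pairs
  have hregf : ∀ T, 0 ≤ T → ContinuousOn yf (Icc 0 T) ∧
      IntervalIntegrable (fun s => f (yf s) (uf s)) volume 0 T := fun T hT =>
    reg_core hfc hΩball hT (hoptf.1.restrict' hT) (fun t ht => hbndf t ht.1)
  have hregb : ∀ T, 0 ≤ T → ContinuousOn yb (Icc 0 T) ∧
      IntervalIntegrable (fun s => -f (yb s) (ub s)) volume 0 T := fun T hT =>
    reg_core hnfc hΩball hT (hoptb.1.restrict' hT) (fun t ht => hbndb t ht.1)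
  -- the continuous integrand for the dissipation rate
  have hGc : Continuous (Function.uncurry
      (fun (a : Euc n) (q : Euc pp) => αx ‖(a - ybar, q - ubar)‖)) := by
    apply hαxcont.comp
    apply Continuous.norm
    exact ((continuous_fst.sub continuous_const).prodMk
      ((continuous_snd.sub continuous_const)))
  have hαmono' : MonotoneOn α (Ici 0) := hαmono.monotoneOn
  -- recurrence of the forward optimal trajectory near the turnpike
  have hrecf : ∀ δ, 0 < δ → ∀ N, 0 ≤ N → ∃ t, N ≤ t ∧ ‖yf t - ybar‖ < δ := by
    intro δ hδ N hN
    by_contra hcon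
    push_neg at hcon
    set g : ℝ → ℝ := fun t => αx ‖(yf t - ybar, uf t - ubar)‖ with hg
    have hgint : ∀ T, 0 ≤ T → IntervalIntegrable g volume 0 T := fun T hT =>
      comp_intervalIntegrable hGc hΩball hT (hregf T hT).1 hoptf.1.1
        (hoptf.1.restrict' hT).2.1 (fun t ht => hbndf t ht.1)
    have hg0 : ∀ t, 0 ≤ g t := fun t => hαnn _ (mem_Ici.mpr (le_max_right _ _))
    have hgC : ∀ T, 0 ≤ T → (∫ t in (0:ℝ)..T, g t) ≤ 2*Ms + M := by
      intro T hT
      rcases eq_or_lt_of_le hT with h0 | hTpos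
      · rw [← h0]; simp; linarith
      · have hdisT := hDI T hTpos yf uf (hoptf.1.restrict' hT)
        have heq : (∫ t in (0:ℝ)..T, α ‖(yf t - ybar, uf t - ubar)‖) =
            ∫ t in (0:ℝ)..T, g t := by
          apply intervalIntegral.integral_congr
          intro s _
          rw [hg]; exact (hαxeq _ (norm_nonneg _)).symm
        rw [heq] at hdisT
        have hw' := abs_le.mp (hcstf T hT)
        have hs1 := abs_le.mp (hMs (yf T))
        have hs2 := abs_le.mp (hMs (yf 0))
        linarith
    have hαpos : 0 < α δ := by
      have := hαmono (mem_Ici.mpr le_rfl) (mem_Ici.mpr (le_of_lt hδ)) hδ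
      rwa [hα0] at this
    refine recur_abstract hgint hg0 hgC hαpos hN (fun t htN => ?_)
    have h1 : δ ≤ ‖(yf t - ybar, uf t - ubar)‖ :=
      le_trans (hcon t htN) (norm_fst_le ((yf t - ybar, uf t - ubar) : Euc n × Euc pp))
    calc α δ ≤ α ‖(yf t - ybar, uf t - ubar)‖ :=
          hαmono' (mem_Ici.mpr (le_of_lt hδ)) (mem_Ici.mpr ((le_of_lt hδ).trans h1)) h1
      _ = g t := (hαxeq _ (norm_nonneg _)).symm
  -- recurrence of the backward optimal trajectory near the turnpike
  have hrecb : ∀ δ, 0 < δ → ∀ N, 0 ≤ N → ∃ t, N ≤ t ∧ ‖yb t - ybar‖ < δ := by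
    intro δ hδ N hN
    by_contra hcon
    push_neg at hcon
    set g : ℝ → ℝ := fun t => αx ‖(yb t - ybar, ub t - ubar)‖ with hg
    have hgint : ∀ T, 0 ≤ T → IntervalIntegrable g volume 0 T := fun T hT =>
      comp_intervalIntegrable hGc hΩball hT (hregb T hT).1 hoptb.1.1
        (hoptb.1.restrict' hT).2.1 (fun t ht => hbndb t ht.1)
    have hg0 : ∀ t, 0 ≤ g t := fun t => hαnn _ (mem_Ici.mpr (le_max_right _ _))
    have hgC : ∀ T, 0 ≤ T → (∫ t in (0:ℝ)..T, g t) ≤ 2*Ms + M := by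
      intro T hT
      rcases eq_or_lt_of_le hT with h0 | hTpos
      · rw [← h0]; simp; linarith
      · have hfint : IntervalIntegrable (fun s => f (yb s) (ub s)) volume 0 T :=
          comp_intervalIntegrable hfc hΩball hT (hregb T hT).1 hoptb.1.1
            (hoptb.1.restrict' hT).2.1 (fun t ht => hbndb t ht.1)
        have hadmrev : IsAdmissible f Ω T (fun t => yb (T - t)) (fun t => ub (T - t)) :=
          reverse_admissible hT (hoptb.1.restrict' hT) hfint
        have hdisT := hDI T hTpos _ _ hadmrev
        have heqα : (∫ t in (0:ℝ)..T, α ‖(yb (T - t) - ybar, ub (T - t) - ubar)‖) =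
            ∫ t in (0:ℝ)..T, g t := by
          have h1 : (∫ t in (0:ℝ)..T, α ‖(yb (T - t) - ybar, ub (T - t) - ubar)‖) =
              ∫ t in (0:ℝ)..T, g (T - t) := by
            apply intervalIntegral.integral_congr
            intro s _
            rw [hg]
            exact (hαxeq _ (norm_nonneg _)).symm
          rw [h1]
          have h2 := intervalIntegral.integral_comp_sub_left (a := (0:ℝ)) (b := T) g T
          simpa using h2
        have heqw : (∫ t in (0:ℝ)..T, w (yb (T - t)) (ub (T - t))) =
            ∫ t in (0:ℝ)..T, w (yb t) (ub t) := by
          have h2 := intervalIntegral.integral_comp_sub_left (a := (0:ℝ)) (b := T)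
            (fun s => w (yb s) (ub s)) T
          simpa using h2
        rw [heqα, heqw] at hdisT
        have hw' := abs_le.mp (hcstb T hT)
        have hs1 := abs_le.mp (hMs (yb (T - T)))
        have hs2 := abs_le.mp (hMs (yb (T - 0)))
        linarith
    have hαpos : 0 < α δ := by
      have := hαmono (mem_Ici.mpr le_rfl) (mem_Ici.mpr (le_of_lt hδ)) hδ
      rwa [hα0] at this
    refine recur_abstract hgint hg0 hgC hαpos hN (fun t htN => ?_)
    have h1 : δ ≤ ‖(yb t - ybar, ub t - ubar)‖ :=
      le_trans (hcon t htN) (norm_fst_le ((yb t - ybar, ub t - ubar) : Euc n × Euc pp))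
    calc α δ ≤ α ‖(yb t - ybar, ub t - ubar)‖ :=
          hαmono' (mem_Ici.mpr (le_of_lt hδ)) (mem_Ici.mpr ((le_of_lt hδ).trans h1)) h1
      _ = g t := (hαxeq _ (norm_nonneg _)).symm
  -- conclude via limsup; fix ε > 0
  refine le_of_forall_pos_le_add (fun ε hε => ?_)
  -- bound for w near the turnpike
  obtain ⟨W, hW0, hW⟩ := exists_bound_prod (g := w) hwc ybar ubar Kr Kr
  set εt := ε / (4 * (W + 1)) with hεt
  have hεt0 : 0 < εt := by rw [hεt]; positivity
  have hWεt : W * εt ≤ ε / 4 := by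
    rw [hεt, show W * (ε / (4 * (W + 1))) = (W * ε) / (4 * (W + 1)) by ring,
      div_le_div_iff₀ (by positivity) (by norm_num : (0:ℝ) < 4)]
    nlinarith
  -- small ball on which both minimum times are < εt
  have htf : Tendsto (fun x' => minTime f Ω x' ybar) (𝓝[ball ybar r] ybar) (𝓝 (0:ℝ)) := by
    have h : Tendsto (fun x' => minTime f Ω x' ybar) (𝓝[ball ybar r] ybar)
        (𝓝 (minTime f Ω ybar ybar)) := hτfcont
    rwa [hτf0] at h
  have htb : Tendsto (fun x' => minTime (fun a b => -f a b) Ω x' ybar)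
      (𝓝[ball ybar r] ybar) (𝓝 (0:ℝ)) := by
    have h : Tendsto (fun x' => minTime (fun a b => -f a b) Ω x' ybar) (𝓝[ball ybar r] ybar)
        (𝓝 (minTime (fun a b => -f a b) Ω ybar ybar)) := hτbcont
    rwa [hτb0] at h
  have hev : ∀ᶠ x' in 𝓝[ball ybar r] ybar,
      minTime f Ω x' ybar < εt ∧ minTime (fun a b => -f a b) Ω x' ybar < εt :=
    (htf.eventually (eventually_lt_nhds hεt0)).and (htb.eventually (eventually_lt_nhds hεt0))
  obtain ⟨δ₀, hδ₀pos, hδ₀sub⟩ := Metric.mem_nhdsWithin_iff.mp hev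
  set δ := min (min δ₀ r) r2 with hδdef
  have hδpos : 0 < δ := lt_min (lt_min hδ₀pos hr) hr2
  have hδprop : ∀ x' : Euc n, ‖x' - ybar‖ < δ →
      (minTime f Ω x' ybar < εt ∧ minTime (fun a b => -f a b) Ω x' ybar < εt) ∧
        x' ∈ closedBall ybar r2 := by
    intro x' hx'
    have hmem : x' ∈ ball ybar δ₀ ∩ ball ybar r := by
      constructor
      · exact mem_ball_iff_norm.mpr
          (lt_of_lt_of_le hx' ((min_le_left _ _).trans (min_le_left _ _)))
      · exact mem_ball_iff_norm.mpr
          (lt_of_lt_of_le hx' ((min_le_left _ _).trans (min_le_right _ _)))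
    exact ⟨hδ₀sub hmem,
      mem_closedBall_iff_norm.mpr (le_of_lt (lt_of_lt_of_le hx' (min_le_right _ _)))⟩
  -- choose T₁ and T₂
  obtain ⟨N₁, hN₁⟩ := Filter.eventually_atTop.mp
    (hoptf.2.2.eventually (eventually_lt_nhds
      (show vInf f Ω w x < vInf f Ω w x + ε/4 by linarith)))
  obtain ⟨T₁, hT₁N, hT₁δ⟩ := hrecf δ hδpos (max N₁ 0) (le_max_right _ _)
  have hT₁0 : (0:ℝ) ≤ T₁ := le_trans (le_max_right _ _) hT₁N
  have hcost1 : (∫ t in (0:ℝ)..T₁, w (yf t) (uf t)) < vInf f Ω w x + ε/4 :=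
    hN₁ T₁ (le_trans (le_max_left _ _) hT₁N)
  obtain ⟨N₂, hN₂⟩ := Filter.eventually_atTop.mp
    (hoptb.2.2.eventually (eventually_lt_nhds
      (show vInf (fun a b => -f a b) Ω w z < vInf (fun a b => -f a b) Ω w z + ε/4 by linarith)))
  obtain ⟨T₂, hT₂N, hT₂δ⟩ := hrecb δ hδpos (max N₂ 0) (le_max_right _ _)
  have hT₂0 : (0:ℝ) ≤ T₂ := le_trans (le_max_right _ _) hT₂N
  have hcost5 : (∫ t in (0:ℝ)..T₂, w (yb t) (ub t)) < vInf (fun a b => -f a b) Ω w z + ε/4 :=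
    hN₂ T₂ (le_trans (le_max_left _ _) hT₂N)
  -- minimum-time connecting arcs
  obtain ⟨⟨hτ₁lt, -⟩, hx₁r2⟩ := hδprop (yf T₁) hT₁δ
  obtain ⟨⟨-, hτ₂lt⟩, hx₂r2⟩ := hδprop (yb T₂) hT₂δ
  obtain ⟨y₁, u₁, had₁, hy₁0, hy₁end, hbd₁⟩ := hA8f (yf T₁) hx₁r2
  obtain ⟨y₂, u₂, had₂, hy₂0, hy₂end, hbd₂⟩ := hA8b (yb T₂) hx₂r2
  set τ₁ := minTime f Ω (yf T₁) ybar with hτ₁def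
  set τ₂ := minTime (fun a b => -f a b) Ω (yb T₂) ybar with hτ₂def
  have hτ₁0 : 0 ≤ τ₁ := Real.sInf_nonneg (fun t ht => ht.1)
  have hτ₂0 : 0 ≤ τ₂ := Real.sInf_nonneg (fun t ht => ht.1)
  -- regularity and integrability of the pieces
  have hbd₁y : ∀ t ∈ Icc (0:ℝ) τ₁, ‖y₁ t‖ ≤ Kr + ‖ybar‖ := by
    intro t ht
    have h := hbd₁ t ht
    have h2 := norm_nonneg (u₁ t - ubar)
    calc ‖y₁ t‖ = ‖(y₁ t - ybar) + ybar‖ := by rw [sub_add_cancel]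
      _ ≤ ‖y₁ t - ybar‖ + ‖ybar‖ := norm_add_le _ _
      _ ≤ Kr + ‖ybar‖ := by linarith
  have hbd₂y : ∀ t ∈ Icc (0:ℝ) τ₂, ‖y₂ t‖ ≤ Kr + ‖ybar‖ := by
    intro t ht
    have h := hbd₂ t ht
    have h2 := norm_nonneg (u₂ t - ubar)
    calc ‖y₂ t‖ = ‖(y₂ t - ybar) + ybar‖ := by rw [sub_add_cancel]
      _ ≤ ‖y₂ t - ybar‖ + ‖ybar‖ := norm_add_le _ _
      _ ≤ Kr + ‖ybar‖ := by linarith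
  have hreg₁ := reg_core hfc hΩball hτ₁0 had₁ hbd₁y
  have hint₁f : IntervalIntegrable (fun s => f (y₁ s) (u₁ s)) volume 0 τ₁ := hreg₁.2
  have hint₁w : IntervalIntegrable (fun s => w (y₁ s) (u₁ s)) volume 0 τ₁ :=
    comp_intervalIntegrable hwc hΩball hτ₁0 hreg₁.1 had₁.1 had₁.2.1 hbd₁y
  have hreg₂ := reg_core hnfc hΩball hτ₂0 had₂ hbd₂y
  have hfint₂ : IntervalIntegrable (fun s => f (y₂ s) (u₂ s)) volume 0 τ₂ :=
    comp_intervalIntegrable hfc hΩball hτ₂0 hreg₂.1 had₂.1 had₂.2.1 hbd₂y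
  have hint₂w : IntervalIntegrable (fun s => w (y₂ s) (u₂ s)) volume 0 τ₂ :=
    comp_intervalIntegrable hwc hΩball hτ₂0 hreg₂.1 had₂.1 had₂.2.1 hbd₂y
  have had₄ : IsAdmissible f Ω τ₂ (fun t => y₂ (τ₂ - t)) (fun t => u₂ (τ₂ - t)) :=
    reverse_admissible hτ₂0 had₂ hfint₂
  have hint₄f : IntervalIntegrable (fun s => f (y₂ (τ₂ - s)) (u₂ (τ₂ - s))) volume 0 τ₂ := by
    simpa using (hfint₂.comp_sub_left τ₂).symm
  have hint₄w : IntervalIntegrable (fun s => w (y₂ (τ₂ - s)) (u₂ (τ₂ - s))) volume 0 τ₂ := by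
    simpa using (hint₂w.comp_sub_left τ₂).symm
  -- the backward tail, reversed
  have hregb2 := hregb T₂ hT₂0
  have hfintb : IntervalIntegrable (fun s => f (yb s) (ub s)) volume 0 T₂ :=
    comp_intervalIntegrable hfc hΩball hT₂0 hregb2.1 hoptb.1.1
      (hoptb.1.restrict' hT₂0).2.1 (fun t ht => hbndb t ht.1)
  have hintbw : IntervalIntegrable (fun s => w (yb s) (ub s)) volume 0 T₂ :=
    comp_intervalIntegrable hwc hΩball hT₂0 hregb2.1 hoptb.1.1
      (hoptb.1.restrict' hT₂0).2.1 (fun t ht => hbndb t ht.1)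
  have had₅ : IsAdmissible f Ω T₂ (fun t => yb (T₂ - t)) (fun t => ub (T₂ - t)) :=
    reverse_admissible hT₂0 (hoptb.1.restrict' hT₂0) hfintb
  have hint5f : IntervalIntegrable (fun s => f (yb (T₂ - s)) (ub (T₂ - s))) volume 0 T₂ := by
    simpa using (hfintb.comp_sub_left T₂).symm
  have hint5w : IntervalIntegrable (fun s => w (yb (T₂ - s)) (ub (T₂ - s))) volume 0 T₂ := by
    simpa using (hintbw.comp_sub_left T₂).symm
  have hcost5eq : (∫ t in (0:ℝ)..T₂, w (yb (T₂ - t)) (ub (T₂ - t))) =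
      ∫ t in (0:ℝ)..T₂, w (yb t) (ub t) := by
    have h2 := intervalIntegral.integral_comp_sub_left (a := (0:ℝ)) (b := T₂)
      (fun s => w (yb s) (ub s)) T₂
    simpa using h2
  -- piece 1
  have hint1f : IntervalIntegrable (fun s => f (yf s) (uf s)) volume 0 T₁ := (hregf T₁ hT₁0).2
  have hint1w : IntervalIntegrable (fun s => w (yf s) (uf s)) volume 0 T₁ :=
    comp_intervalIntegrable hwc hΩball hT₁0 (hregf T₁ hT₁0).1 hoptf.1.1
      (hoptf.1.restrict' hT₁0).2.1 (fun t ht => hbndf t ht.1)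
  -- cost bounds of the connecting arcs
  have hcost2 : |∫ t in (0:ℝ)..τ₁, w (y₁ t) (u₁ t)| ≤ W * τ₁ := by
    have hb' : ∀ s ∈ Ι (0:ℝ) τ₁, ‖w (y₁ s) (u₁ s)‖ ≤ W := by
      intro s hs
      rw [uIoc_of_le hτ₁0] at hs
      have h := hbd₁ s ⟨le_of_lt hs.1, hs.2⟩
      exact hW _ _ (by linarith [norm_nonneg (u₁ s - ubar)])
        (by linarith [norm_nonneg (y₁ s - ybar)])
    have h2 := intervalIntegral.norm_integral_le_of_norm_le_const hb'
    rwa [Real.norm_eq_abs, sub_zero, abs_of_nonneg hτ₁0] at h2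
  have hcost4 : |∫ t in (0:ℝ)..τ₂, w (y₂ (τ₂ - t)) (u₂ (τ₂ - t))| ≤ W * τ₂ := by
    have hb' : ∀ s ∈ Ι (0:ℝ) τ₂, ‖w (y₂ (τ₂ - s)) (u₂ (τ₂ - s))‖ ≤ W := by
      intro s hs
      rw [uIoc_of_le hτ₂0] at hs
      have h := hbd₂ (τ₂ - s) ⟨by linarith [hs.2], by linarith [hs.1]⟩
      exact hW _ _ (by linarith [norm_nonneg (u₂ (τ₂ - s) - ubar)])
        (by linarith [norm_nonneg (y₂ (τ₂ - s) - ybar)])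
    have h2 := intervalIntegral.norm_integral_le_of_norm_le_const hb'
    rwa [Real.norm_eq_abs, sub_zero, abs_of_nonneg hτ₂0] at h2
  -- the stationary piece
  have had₃ : ∀ d : ℝ, 0 ≤ d → IsAdmissible f Ω d (fun _ => ybar) (fun _ => ubar) := by
    intro d hd
    refine ⟨measurable_const, Eventually.of_forall (fun _ => hubarΩ), fun t ht => ?_⟩
    show ybar = ybar + ∫ s in (0:ℝ)..t, f ybar ubar
    rw [hfbar]
    simp
  -- coboundedness for the limsup
  have hcobdd : IsCoboundedUnder (· ≤ ·) atTop
      (fun T => ∫ t in (0:ℝ)..T, w (yT T t) (uT T t)) := by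
    apply isCoboundedUnder_le_of_eventually_le atTop (x := -M)
    filter_upwards [eventually_ge_atTop T0] with T hT
    exact (abs_le.mp (hcstT T hT)).1
  apply Filter.limsup_le_of_le hcobdd
  filter_upwards [eventually_ge_atTop (max T0 (T₁ + τ₁ + τ₂ + T₂))] with T hTge
  -- per-horizon construction
  have hTT0 : T0 ≤ T := le_trans (le_max_left _ _) hTge
  have hTpos : (0:ℝ) < T := lt_of_lt_of_le hT0 hTT0
  have hT0T : (0:ℝ) ≤ T := le_of_lt hTpos
  set d := T - T₁ - τ₁ - τ₂ - T₂ with hd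
  have hd0 : 0 ≤ d := by
    rw [hd]
    have h := le_trans (le_max_right _ _) hTge
    linarith
  have hΩm : MeasurableSet Ω := hΩcpt.isClosed.measurableSet
  -- concatenations
  have hm2 : y₁ 0 = yf T₁ := hy₁0
  have c2 := concat_admissible hΩm hT₁0 hτ₁0 (hoptf.1.restrict' hT₁0) had₁ hm2 hint1f hint₁f
  have c2f := concat_integral f hT₁0 hτ₁0 hm2 hint1f hint₁f
  have c2w := concat_integral w hT₁0 hτ₁0 hm2 hint1w hint₁w
  have hend2 : glueTraj T₁ yf y₁ (T₁ + τ₁) = ybar := by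
    rw [glueTraj_end hτ₁0 hm2]; exact hy₁end
  have ha2 : (0:ℝ) ≤ T₁ + τ₁ := by linarith
  have hm3 : (fun _ : ℝ => ybar) 0 = glueTraj T₁ yf y₁ (T₁ + τ₁) := by rw [hend2]
  have c3 := concat_admissible hΩm ha2 hd0 c2 (had₃ d hd0) hm3 c2f.1
    (intervalIntegrable_const (c := f ybar ubar))
  have c3f := concat_integral f (y₂ := fun _ => ybar) (u₂ := fun _ : ℝ => ubar) ha2 hd0 hm3
    c2f.1 (intervalIntegrable_const (c := f ybar ubar))
  have c3w := concat_integral w (y₂ := fun _ => ybar) (u₂ := fun _ : ℝ => ubar) ha2 hd0 hm3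
    c2w.1 (intervalIntegrable_const (c := w ybar ubar))
  have hend3 : glueTraj (T₁ + τ₁) (glueTraj T₁ yf y₁) (fun _ => ybar) (T₁ + τ₁ + d) = ybar :=
    glueTraj_end hd0 hm3
  have ha3 : (0:ℝ) ≤ T₁ + τ₁ + d := by linarith
  have hm4 : (fun t => y₂ (τ₂ - t)) 0 =
      glueTraj (T₁ + τ₁) (glueTraj T₁ yf y₁) (fun _ => ybar) (T₁ + τ₁ + d) := by
    rw [hend3]; show y₂ (τ₂ - 0) = ybar; rw [sub_zero]; exact hy₂end
  have c4 := concat_admissible hΩm ha3 hτ₂0 c3 had₄ hm4 c3f.1 hint₄f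
  have c4f := concat_integral f ha3 hτ₂0 hm4 c3f.1 hint₄f
  have c4w := concat_integral w ha3 hτ₂0 hm4 c3w.1 hint₄w
  have hend4 : glueTraj (T₁ + τ₁ + d)
      (glueTraj (T₁ + τ₁) (glueTraj T₁ yf y₁) (fun _ => ybar)) (fun t => y₂ (τ₂ - t))
      (T₁ + τ₁ + d + τ₂) = yb T₂ := by
    rw [glueTraj_end hτ₂0 hm4]; show y₂ (τ₂ - τ₂) = yb T₂; rw [sub_self]; exact hy₂0
  have ha4 : (0:ℝ) ≤ T₁ + τ₁ + d + τ₂ := by linarith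
  have hm5 : (fun t => yb (T₂ - t)) 0 = glueTraj (T₁ + τ₁ + d)
      (glueTraj (T₁ + τ₁) (glueTraj T₁ yf y₁) (fun _ => ybar)) (fun t => y₂ (τ₂ - t))
      (T₁ + τ₁ + d + τ₂) := by
    rw [hend4]; show yb (T₂ - 0) = yb T₂; rw [sub_zero]
  have c5 := concat_admissible hΩm ha4 hT₂0 c4 had₅ hm5 c4f.1 hint5f
  have c5w := concat_integral w ha4 hT₂0 hm5 c4w.1 hint5w
  have hLT : T₁ + τ₁ + d + τ₂ + T₂ = T := by rw [hd]; ring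
  rw [hLT] at c5
  -- endpoints of the glued trajectory
  have hY0 : glueTraj (T₁ + τ₁ + d + τ₂)
      (glueTraj (T₁ + τ₁ + d) (glueTraj (T₁ + τ₁) (glueTraj T₁ yf y₁) (fun _ => ybar))
        (fun t => y₂ (τ₂ - t))) (fun t => yb (T₂ - t)) 0 = x := by
    rw [glueTraj_zero ha4, glueTraj_zero ha3, glueTraj_zero ha2, glueTraj_zero hT₁0, hoptf.2.1]
  have hYT : glueTraj (T₁ + τ₁ + d + τ₂)
      (glueTraj (T₁ + τ₁ + d) (glueTraj (T₁ + τ₁) (glueTraj T₁ yf y₁) (fun _ => ybar))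
        (fun t => y₂ (τ₂ - t))) (fun t => yb (T₂ - t)) T = z := by
    rw [← hLT, glueTraj_end hT₂0 hm5]
    show yb (T₂ - T₂) = z
    rw [sub_self]; exact hoptb.2.1
  -- cost decomposition of the glued pair
  have hconst0 : (∫ t in (0:ℝ)..d, w ybar ubar) = 0 := by
    rw [intervalIntegral.integral_const, hwbar, smul_zero]
  have htotw := c5w.2
  rw [hLT, c4w.2, c3w.2, c2w.2, hcost5eq] at htotw
  have hIIw5 := c5w.1
  rw [hLT] at hIIw5
  -- relating the f0-cost and the w-cost of the glued pair
  have hglue_f0 : (∫ t in (0:ℝ)..T, f0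
        (glueTraj (T₁ + τ₁ + d + τ₂)
          (glueTraj (T₁ + τ₁ + d) (glueTraj (T₁ + τ₁) (glueTraj T₁ yf y₁) (fun _ => ybar))
            (fun t => y₂ (τ₂ - t))) (fun t => yb (T₂ - t)) t)
        (glueFn (T₁ + τ₁ + d + τ₂)
          (glueFn (T₁ + τ₁ + d) (glueFn (T₁ + τ₁) (glueFn T₁ uf u₁) (fun _ => ubar))
            (fun t => u₂ (τ₂ - t))) (fun t => ub (T₂ - t)) t)) =
      (∫ t in (0:ℝ)..T, w
        (glueTraj (T₁ + τ₁ + d + τ₂)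
          (glueTraj (T₁ + τ₁ + d) (glueTraj (T₁ + τ₁) (glueTraj T₁ yf y₁) (fun _ => ybar))
            (fun t => y₂ (τ₂ - t))) (fun t => yb (T₂ - t)) t)
        (glueFn (T₁ + τ₁ + d + τ₂)
          (glueFn (T₁ + τ₁ + d) (glueFn (T₁ + τ₁) (glueFn T₁ uf u₁) (fun _ => ubar))
            (fun t => u₂ (τ₂ - t))) (fun t => ub (T₂ - t)) t)) + T * vbar := by
    rw [intervalIntegral.integral_congr (g := fun t =>
        w (glueTraj (T₁ + τ₁ + d + τ₂)
          (glueTraj (T₁ + τ₁ + d) (glueTraj (T₁ + τ₁) (glueTraj T₁ yf y₁) (fun _ => ybar))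
            (fun t => y₂ (τ₂ - t))) (fun t => yb (T₂ - t)) t)
        (glueFn (T₁ + τ₁ + d + τ₂)
          (glueFn (T₁ + τ₁ + d) (glueFn (T₁ + τ₁) (glueFn T₁ uf u₁) (fun _ => ubar))
            (fun t => u₂ (τ₂ - t))) (fun t => ub (T₂ - t)) t) + vbar)
      (fun s _ => hf0w _ _),
      intervalIntegral.integral_add hIIw5 intervalIntegrable_const,
      intervalIntegral.integral_const, smul_eq_mul, sub_zero]
  -- the optimal pair for the finite horizon
  obtain ⟨hadmT, hyT0, hyTT, hvalT⟩ := hoptT T hTT0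
  have hregT := reg_core hfc hΩball hT0T hadmT (hbndT T hTT0)
  have hintTw : IntervalIntegrable (fun s => w (yT T s) (uT T s)) volume 0 T :=
    comp_intervalIntegrable hwc hΩball hT0T hregT.1 hadmT.1 hadmT.2.1 (hbndT T hTT0)
  have hoptw : (∫ t in (0:ℝ)..T, w (yT T t) (uT T t)) =
      (∫ t in (0:ℝ)..T, f0 (yT T t) (uT T t)) - T * vbar := by
    rw [intervalIntegral.integral_congr (f := fun t => f0 (yT T t) (uT T t))
        (g := fun t => w (yT T t) (uT T t) + vbar) (fun s _ => hf0w _ _),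
      intervalIntegral.integral_add hintTw intervalIntegrable_const,
      intervalIntegral.integral_const, smul_eq_mul, sub_zero]
    ring
  -- value function comparison
  have hbddbelow : BddBelow {cv : ℝ | ∃ y' u', IsAdmissible f Ω T y' u' ∧ y' 0 = x ∧
      y' T = z ∧ cv = ∫ t in (0:ℝ)..T, f0 (y' t) (u' t)} := by
    refine ⟨min 0 (T * vbar - 2 * Ms), ?_⟩
    rintro cv ⟨y', u', had', -, -, rfl⟩
    by_cases hi : IntervalIntegrable (fun t => f0 (y' t) (u' t)) volume 0 T
    · have hiw : IntervalIntegrable (fun t => w (y' t) (u' t)) volume 0 T := by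
        have he : (fun t => w (y' t) (u' t)) = fun t => f0 (y' t) (u' t) - vbar := by
          funext t; rw [hf0w]; ring
        rw [he]; exact hi.sub intervalIntegrable_const
      have hdisT' := hDI T hTpos y' u' had'
      have hαint : 0 ≤ ∫ t in (0:ℝ)..T, α ‖(y' t - ybar, u' t - ubar)‖ :=
        intervalIntegral.integral_nonneg hT0T
          (fun s _ => hαnn _ (mem_Ici.mpr (norm_nonneg _)))
      have hsplit : (∫ t in (0:ℝ)..T, f0 (y' t) (u' t)) =
          (∫ t in (0:ℝ)..T, w (y' t) (u' t)) + T * vbar := by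
        rw [intervalIntegral.integral_congr (f := fun t => f0 (y' t) (u' t))
            (g := fun t => w (y' t) (u' t) + vbar) (fun s _ => hf0w _ _),
          intervalIntegral.integral_add hiw intervalIntegrable_const,
          intervalIntegral.integral_const, smul_eq_mul, sub_zero]
      have hs1 := abs_le.mp (hMs (y' T))
      have hs2 := abs_le.mp (hMs (y' 0))
      rw [hsplit]
      have hfin : T * vbar - 2 * Ms ≤ (∫ t in (0:ℝ)..T, w (y' t) (u' t)) + T * vbar := by
        linarith
      exact le_trans (min_le_right _ _) hfin
    · rw [intervalIntegral.integral_undef hi]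
      exact min_le_left _ _
  have hmem : (∫ t in (0:ℝ)..T, f0
        (glueTraj (T₁ + τ₁ + d + τ₂)
          (glueTraj (T₁ + τ₁ + d) (glueTraj (T₁ + τ₁) (glueTraj T₁ yf y₁) (fun _ => ybar))
            (fun t => y₂ (τ₂ - t))) (fun t => yb (T₂ - t)) t)
        (glueFn (T₁ + τ₁ + d + τ₂)
          (glueFn (T₁ + τ₁ + d) (glueFn (T₁ + τ₁) (glueFn T₁ uf u₁) (fun _ => ubar))
            (fun t => u₂ (τ₂ - t))) (fun t => ub (T₂ - t)) t)) ∈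
      {cv : ℝ | ∃ y' u', IsAdmissible f Ω T y' u' ∧ y' 0 = x ∧ y' T = z ∧
        cv = ∫ t in (0:ℝ)..T, f0 (y' t) (u' t)} :=
    ⟨_, _, c5, hY0, hYT, rfl⟩
  have hvle : valueFn f f0 Ω T x z ≤ ∫ t in (0:ℝ)..T, f0
        (glueTraj (T₁ + τ₁ + d + τ₂)
          (glueTraj (T₁ + τ₁ + d) (glueTraj (T₁ + τ₁) (glueTraj T₁ yf y₁) (fun _ => ybar))
            (fun t => y₂ (τ₂ - t))) (fun t => yb (T₂ - t)) t)
        (glueFn (T₁ + τ₁ + d + τ₂)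
          (glueFn (T₁ + τ₁ + d) (glueFn (T₁ + τ₁) (glueFn T₁ uf u₁) (fun _ => ubar))
            (fun t => u₂ (τ₂ - t))) (fun t => ub (T₂ - t)) t) :=
    csInf_le hbddbelow hmem
  -- final estimate
  have h2b : (∫ t in (0:ℝ)..τ₁, w (y₁ t) (u₁ t)) ≤ ε / 4 := by
    have := (abs_le.mp hcost2).2
    have hh : W * τ₁ ≤ W * εt := mul_le_mul_of_nonneg_left (le_of_lt hτ₁lt) hW0
    linarith
  have h4b : (∫ t in (0:ℝ)..τ₂, w (y₂ (τ₂ - t)) (u₂ (τ₂ - t))) ≤ ε / 4 := by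
    have := (abs_le.mp hcost4).2
    have hh : W * τ₂ ≤ W * εt := mul_le_mul_of_nonneg_left (le_of_lt hτ₂lt) hW0
    linarith
  rw [hoptw, hvalT]
  rw [hglue_f0] at hvle
  rw [htotw] at hvle
  -- hvle : valueFn ≤ (((I1 + I2) + Iconst) + I4) + I5b + T*vbar
  have hconst' : (∫ t in (0:ℝ)..d, w ((fun _ : ℝ => ybar) t) ((fun _ : ℝ => ubar) t)) = 0 :=
    hconst0
  rw [hconst'] at hvle
  linarith
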